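/- arXiv:2110.13048 — 3 statements merged into one kernel-verified Lean document; each statement's English description precedes it below -/
import Mathlib

section
/- Let (Ω, μ) be a probability space, t : Ω → ℝ nonnegative and integrable, T > 0 a constant, and set ζ = 1/E[min(t,T)] (assumed finite and positive). Then for any measurable φ : Ω → ℝ with φ > 0 a.e. and E[φ] = 1, one has E[ζ²t²/φ] = E[(√φ − ζ·min(t,T)/√φ)²] + E[(ζ²(t² − T²)/φ)·1{t > T}] + 1. -/
open MeasureTheory

theorem stmt_5 {Ω : Type*} [MeasurableSpace Ω] (μ : Measure Ω) [IsProbabilityMeasure μ]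
    (t φ : Ω → ℝ) (T : ℝ) (hT : 0 < T)
    (ht_meas : Measurable t) (hφ_meas : Measurable φ)
    (ht_nonneg : ∀ ω, 0 ≤ t ω) (ht_int : Integrable t μ)
    (hφ_pos : ∀ᵐ ω ∂μ, 0 < φ ω) (hφ_int : Integrable φ μ) (hφ_one : ∫ ω, φ ω ∂μ = 1)
    (hmin_pos : 0 < ∫ ω, min (t ω) T ∂μ)
    (hint : Integrable (fun ω => t ω ^ 2 / φ ω) μ)
    (ζ : ℝ) (hζ : ζ = 1 / ∫ ω, min (t ω) T ∂μ) :
    ∫ ω, ζ ^ 2 * t ω ^ 2 / φ ω ∂μ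
      = ∫ ω, (Real.sqrt (φ ω) - ζ * min (t ω) T / Real.sqrt (φ ω)) ^ 2 ∂μ
        + ∫ ω, (ζ ^ 2 * (t ω ^ 2 - T ^ 2) / φ ω)
            * Set.indicator {ω' | T < t ω'} (fun _ => (1 : ℝ)) ω ∂μ
        + 1 := by
  set m : Ω → ℝ := fun ω => min (t ω) T with hm
  have hm_meas : Measurable m := ht_meas.min measurable_const
  have hm_nonneg : ∀ ω, 0 ≤ m ω := fun ω => le_min (ht_nonneg ω) hT.le
  have hm_le : ∀ ω, m ω ≤ t ω := fun ω => min_le_left _ _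
  have hm_int : Integrable m μ := by
    refine ht_int.mono hm_meas.aestronglyMeasurable (ae_of_all _ fun ω => ?_)
    rw [Real.norm_eq_abs, Real.norm_eq_abs, abs_of_nonneg (hm_nonneg ω),
      abs_of_nonneg (ht_nonneg ω)]
    exact hm_le ω
  have hq : Integrable (fun ω => ζ ^ 2 * (t ω ^ 2 / φ ω)) μ := hint.const_mul _
  have hm2 : Integrable (fun ω => ζ ^ 2 * (m ω ^ 2 / φ ω)) μ := by
    refine hq.mono ((((hm_meas.pow_const 2).div hφ_meas).const_mul _).aestronglyMeasurable)
      (hφ_pos.mono fun ω hφ => ?_)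
    rw [Real.norm_eq_abs, Real.norm_eq_abs]
    have h1 : 0 ≤ ζ ^ 2 * (m ω ^ 2 / φ ω) := by positivity
    have h2 : 0 ≤ ζ ^ 2 * (t ω ^ 2 / φ ω) := by positivity
    rw [abs_of_nonneg h1, abs_of_nonneg h2]
    have : m ω ^ 2 ≤ t ω ^ 2 := pow_le_pow_left₀ (hm_nonneg ω) (hm_le ω) 2
    gcongr
  -- the indicator term equals ζ²(t² - m²)/φ pointwise
  have hf2_eq : (fun ω => (ζ ^ 2 * (t ω ^ 2 - T ^ 2) / φ ω)
      * Set.indicator {ω' | T < t ω'} (fun _ => (1 : ℝ)) ω)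
      = fun ω => ζ ^ 2 * (t ω ^ 2 / φ ω) - ζ ^ 2 * (m ω ^ 2 / φ ω) := by
    funext ω
    by_cases h : T < t ω
    · simp only [Set.indicator_apply, Set.mem_setOf_eq, if_pos h, hm, min_eq_right h.le]
      field_simp
    · simp only [Set.indicator_apply, Set.mem_setOf_eq, if_neg h, hm,
        min_eq_left (not_lt.mp h)]
      ring
  have hf2_int : Integrable (fun ω => (ζ ^ 2 * (t ω ^ 2 - T ^ 2) / φ ω)
      * Set.indicator {ω' | T < t ω'} (fun _ => (1 : ℝ)) ω) μ := by
    rw [hf2_eq]; exact hq.sub hm2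
  -- the square term equals φ - 2ζm + ζ²m²/φ a.e.
  have hf1_eq : (fun ω => (Real.sqrt (φ ω) - ζ * m ω / Real.sqrt (φ ω)) ^ 2)
      =ᵐ[μ] fun ω => φ ω - 2 * ζ * m ω + ζ ^ 2 * (m ω ^ 2 / φ ω) := by
    refine hφ_pos.mono fun ω hφ => ?_
    have hs : Real.sqrt (φ ω) ^ 2 = φ ω := Real.sq_sqrt hφ.le
    have hs0 : Real.sqrt (φ ω) ≠ 0 := by positivity
    field_simp
    rw [hs]; ring
  have hf1_int : Integrable (fun ω => (Real.sqrt (φ ω) - ζ * m ω / Real.sqrt (φ ω)) ^ 2) μ := by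
    refine Integrable.congr ?_ hf1_eq.symm
    exact (hφ_int.sub (hm_int.const_mul (2 * ζ))).add hm2
  have hf3_int : Integrable (fun ω => 2 * ζ * m ω - φ ω) μ :=
    (hm_int.const_mul (2 * ζ)).sub hφ_int
  have key : (fun ω => ζ ^ 2 * t ω ^ 2 / φ ω)
      =ᵐ[μ] fun ω => (Real.sqrt (φ ω) - ζ * m ω / Real.sqrt (φ ω)) ^ 2
        + ((ζ ^ 2 * (t ω ^ 2 - T ^ 2) / φ ω)
            * Set.indicator {ω' | T < t ω'} (fun _ => (1 : ℝ)) ω)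
        + (2 * ζ * m ω - φ ω) := by
    filter_upwards [hf1_eq] with ω h1
    rw [h1, congrFun hf2_eq ω]
    field_simp
    ring
  calc ∫ ω, ζ ^ 2 * t ω ^ 2 / φ ω ∂μ
      = ∫ ω, ((Real.sqrt (φ ω) - ζ * m ω / Real.sqrt (φ ω)) ^ 2
        + ((ζ ^ 2 * (t ω ^ 2 - T ^ 2) / φ ω)
            * Set.indicator {ω' | T < t ω'} (fun _ => (1 : ℝ)) ω)
        + (2 * ζ * m ω - φ ω)) ∂μ := integral_congr_ae key
    _ = (∫ ω, (Real.sqrt (φ ω) - ζ * m ω / Real.sqrt (φ ω)) ^ 2 ∂μ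
        + ∫ ω, ((ζ ^ 2 * (t ω ^ 2 - T ^ 2) / φ ω)
            * Set.indicator {ω' | T < t ω'} (fun _ => (1 : ℝ)) ω) ∂μ)
        + ∫ ω, (2 * ζ * m ω - φ ω) ∂μ := by
          have h12 : Integrable (fun ω => (Real.sqrt (φ ω) - ζ * m ω / Real.sqrt (φ ω)) ^ 2
              + ((ζ ^ 2 * (t ω ^ 2 - T ^ 2) / φ ω)
                * Set.indicator {ω' | T < t ω'} (fun _ => (1 : ℝ)) ω)) μ :=
            hf1_int.add hf2_int
          rw [integral_add h12 hf3_int, integral_add hf1_int hf2_int]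
    _ = _ := by
          have h3 : ∫ ω, (2 * ζ * m ω - φ ω) ∂μ = 1 := by
            rw [integral_sub (hm_int.const_mul (2 * ζ)) hφ_int, integral_const_mul, hφ_one, hζ]
            field_simp
            norm_num
          rw [h3]
end

section
/- Let X be a random vector in ℝ^d, w : ℝ^d → ℝ a positive measurable weight, κ : ℝ^d → ℝ a measurable function with κ ≥ 1 a.e., and G : ℝ^d → ℝ^d measurable. Assume M = E[w(X)·G(X)G(X)ᵀ], S = E[κ(X)·w(X)·G(X)G(X)ᵀ], and Λ = E[κ(X)^{-1}·w(X)·G(X)G(X)ᵀ] are all finite, with M and Λ positive definite. Then M^{-1} S M^{-1} − Λ^{-1} is positive semidefinite. -/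
open MeasureTheory Matrix

private lemma expand_quad {d : ℕ} (f : ℝ) (g u v : Fin d → ℝ) :
    f * ((∑ i, u i * g i) * (∑ j, v j * g j))
      = ∑ i, ∑ j, (u i * v j) * (f * (g i * g j)) := by
  rw [Finset.sum_mul_sum, Finset.mul_sum]
  exact Finset.sum_congr rfl fun i _ => by
    rw [Finset.mul_sum]
    exact Finset.sum_congr rfl fun j _ => by ring

private lemma aux_int {Ω : Type*} [MeasurableSpace Ω] {μ : Measure Ω} {d : ℕ}
    (f : Ω → ℝ) (G : Ω → Fin d → ℝ)
    (hint : ∀ i j, Integrable (fun ω => f ω * (G ω i * G ω j)) μ)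
    (u v : Fin d → ℝ) :
    Integrable (fun ω => f ω * ((∑ i, u i * G ω i) * (∑ j, v j * G ω j))) μ := by
  have h : (fun ω => f ω * ((∑ i, u i * G ω i) * (∑ j, v j * G ω j)))
      = fun ω => ∑ i, ∑ j, (u i * v j) * (f ω * (G ω i * G ω j)) := by
    funext ω; exact expand_quad _ _ _ _
  rw [h]
  exact integrable_finset_sum _ fun i _ =>
    integrable_finset_sum _ fun j _ => (hint i j).const_mul _

private lemma aux_eq {Ω : Type*} [MeasurableSpace Ω] {μ : Measure Ω} {d : ℕ}
    (f : Ω → ℝ) (G : Ω → Fin d → ℝ)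
    (hint : ∀ i j, Integrable (fun ω => f ω * (G ω i * G ω j)) μ)
    (A : Matrix (Fin d) (Fin d) ℝ)
    (hA : ∀ i j, A i j = ∫ ω, f ω * (G ω i * G ω j) ∂μ)
    (u v : Fin d → ℝ) :
    u ⬝ᵥ A *ᵥ v = ∫ ω, f ω * ((∑ i, u i * G ω i) * (∑ j, v j * G ω j)) ∂μ := by
  calc u ⬝ᵥ A *ᵥ v
      = ∑ i, ∑ j, (u i * v j) * (∫ ω, f ω * (G ω i * G ω j) ∂μ) := by
        simp only [dotProduct, mulVec, hA, Finset.mul_sum]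
        exact Finset.sum_congr rfl fun i _ => Finset.sum_congr rfl fun j _ => by ring
    _ = ∑ i, ∑ j, ∫ ω, (u i * v j) * (f ω * (G ω i * G ω j)) ∂μ := by
        exact Finset.sum_congr rfl fun i _ => Finset.sum_congr rfl fun j _ =>
          (integral_const_mul _ _).symm
    _ = ∫ ω, ∑ i, ∑ j, (u i * v j) * (f ω * (G ω i * G ω j)) ∂μ := by
        rw [integral_finset_sum _ (fun i _ =>
          integrable_finset_sum _ fun j _ => (hint i j).const_mul _)]
        exact Finset.sum_congr rfl fun i _ =>
          (integral_finset_sum _ fun j _ => (hint i j).const_mul _).symm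
    _ = ∫ ω, f ω * ((∑ i, u i * G ω i) * (∑ j, v j * G ω j)) ∂μ :=
        integral_congr_ae (ae_of_all _ fun ω => (expand_quad _ _ _ _).symm)

theorem stmt_7 {Ω : Type*} [MeasurableSpace Ω] (μ : Measure Ω) [IsProbabilityMeasure μ]
    {d : ℕ} (W K : Ω → ℝ) (G : Ω → Fin d → ℝ)
    (hW : ∀ᵐ ω ∂μ, 0 < W ω) (hK : ∀ᵐ ω ∂μ, 1 ≤ K ω)
    (M S Λ : Matrix (Fin d) (Fin d) ℝ)
    (hMint : ∀ i j, Integrable (fun ω => W ω * (G ω i * G ω j)) μ)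
    (hSint : ∀ i j, Integrable (fun ω => K ω * W ω * (G ω i * G ω j)) μ)
    (hΛint : ∀ i j, Integrable (fun ω => (K ω)⁻¹ * W ω * (G ω i * G ω j)) μ)
    (hM : ∀ i j, M i j = ∫ ω, W ω * (G ω i * G ω j) ∂μ)
    (hS : ∀ i j, S i j = ∫ ω, K ω * W ω * (G ω i * G ω j) ∂μ)
    (hΛ : ∀ i j, Λ i j = ∫ ω, (K ω)⁻¹ * W ω * (G ω i * G ω j) ∂μ)
    (hMpd : M.PosDef) (hΛpd : Λ.PosDef) :
    (M⁻¹ * S * M⁻¹ - Λ⁻¹).PosSemidef := by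
  have hMdet : IsUnit M.det := isUnit_iff_ne_zero.mpr hMpd.det_pos.ne'
  have hΛdet : IsUnit Λ.det := isUnit_iff_ne_zero.mpr hΛpd.det_pos.ne'
  -- symmetry
  have hMsym : M.IsHermitian := by
    ext i j
    simp only [conjTranspose_apply, star_trivial]
    rw [hM, hM]
    exact integral_congr_ae (ae_of_all _ fun ω => by ring)
  have hSsym : S.IsHermitian := by
    ext i j
    simp only [conjTranspose_apply, star_trivial]
    rw [hS, hS]
    exact integral_congr_ae (ae_of_all _ fun ω => by ring)
  have hMinvsym : M⁻¹.IsHermitian := hMsym.inv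
  have hHerm : (M⁻¹ * S * M⁻¹ - Λ⁻¹).IsHermitian := by
    refine IsHermitian.sub ?_ hΛpd.1.inv
    show (M⁻¹ * S * M⁻¹)ᴴ = M⁻¹ * S * M⁻¹
    rw [conjTranspose_mul, conjTranspose_mul, hMinvsym.eq, hSsym.eq, mul_assoc]
  refine posSemidef_iff_dotProduct_mulVec.mpr ⟨hHerm, fun x => ?_⟩
  simp only [star_trivial]
  set u : Fin d → ℝ := M⁻¹ *ᵥ x with hu
  set v : Fin d → ℝ := Λ⁻¹ *ᵥ x with hv
  -- identify the three quadratic forms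
  have h1 : x ⬝ᵥ (M⁻¹ * S * M⁻¹) *ᵥ x = u ⬝ᵥ S *ᵥ u := by
    have hMit : M⁻¹ᵀ = M⁻¹ := by
      rw [← conjTranspose_eq_transpose_of_trivial, hMinvsym.eq]
    rw [← mulVec_mulVec, ← mulVec_mulVec, dotProduct_mulVec, ← mulVec_transpose, hMit]
  have h2 : x ⬝ᵥ Λ⁻¹ *ᵥ x = v ⬝ᵥ Λ *ᵥ v := by
    rw [show Λ *ᵥ v = x by rw [hv, mulVec_mulVec, mul_nonsing_inv _ hΛdet, one_mulVec]]
    rw [dotProduct_comm]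
  have h3 : u ⬝ᵥ M *ᵥ v = x ⬝ᵥ Λ⁻¹ *ᵥ x := by
    rw [dotProduct_mulVec, ← mulVec_transpose, show Mᵀ = M from hMsym.eq, hu,
      mulVec_mulVec, mul_nonsing_inv _ hMdet, one_mulVec]
  -- integral representations
  set a : Ω → ℝ := fun ω => ∑ i, u i * G ω i with ha
  set b : Ω → ℝ := fun ω => ∑ i, v i * G ω i with hb
  have eS : u ⬝ᵥ S *ᵥ u = ∫ ω, (fun ω => K ω * W ω) ω * (a ω * a ω) ∂μ :=
    aux_eq _ G hSint S hS u u
  have eM : u ⬝ᵥ M *ᵥ v = ∫ ω, W ω * (a ω * b ω) ∂μ :=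
    aux_eq _ G hMint M hM u v
  have eΛ : v ⬝ᵥ Λ *ᵥ v = ∫ ω, (fun ω => (K ω)⁻¹ * W ω) ω * (b ω * b ω) ∂μ :=
    aux_eq _ G hΛint Λ hΛ v v
  have iS : Integrable (fun ω => K ω * W ω * (a ω * a ω)) μ :=
    aux_int _ G hSint u u
  have iM : Integrable (fun ω => W ω * (a ω * b ω)) μ :=
    aux_int _ G hMint u v
  have iΛ : Integrable (fun ω => (K ω)⁻¹ * W ω * (b ω * b ω)) μ :=
    aux_int _ G hΛint v v
  -- the key nonnegative integral
  have key : 0 ≤ ∫ ω, (K ω * W ω * (a ω * a ω) - 2 * (W ω * (a ω * b ω))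
      + (K ω)⁻¹ * W ω * (b ω * b ω)) ∂μ := by
    refine integral_nonneg_of_ae ?_
    filter_upwards [hW, hK] with ω hw hk
    have hK0 : (0:ℝ) < K ω := lt_of_lt_of_le one_pos hk
    have hrw : K ω * W ω * (a ω * a ω) - 2 * (W ω * (a ω * b ω))
        + (K ω)⁻¹ * W ω * (b ω * b ω)
        = W ω * (K ω)⁻¹ * (K ω * a ω - b ω)^2 := by
      field_simp
      ring
    rw [hrw]
    positivity
  have hsplit : ∫ ω, (K ω * W ω * (a ω * a ω) - 2 * (W ω * (a ω * b ω))
      + (K ω)⁻¹ * W ω * (b ω * b ω)) ∂μ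
      = (∫ ω, K ω * W ω * (a ω * a ω) ∂μ) - 2 * (∫ ω, W ω * (a ω * b ω) ∂μ)
        + ∫ ω, (K ω)⁻¹ * W ω * (b ω * b ω) ∂μ := by
    have i1 : Integrable (fun ω => K ω * W ω * (a ω * a ω) - 2 * (W ω * (a ω * b ω))) μ :=
      iS.sub (iM.const_mul 2)
    rw [integral_add i1 iΛ, integral_sub iS (iM.const_mul 2), integral_const_mul]
  -- combine
  rw [sub_mulVec, dotProduct_sub, h1, h2, eS, eΛ]
  have hMv : ∫ ω, W ω * (a ω * b ω) ∂μ = v ⬝ᵥ Λ *ᵥ v := by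
    rw [← eM, h3, h2]
  have := le_of_le_of_eq key hsplit
  rw [hMv, eΛ] at this
  simp only at this ⊢
  linarith
end

section
/- Let y ∈ {0,1} with P(y=1|x) = p(x) ∈ (0,1), let r = ρφ(x) ∈ (0,1] and q(x) = e^{g(x)−log r}/(1+e^{g(x)−log r}) where g(x) = log(p(x)/(1−p(x))), and let δ = y + (1−y)·1{u ≤ r} with u uniform on (0,1) independent of y. Then E[δ·(y − q(x)) | x] = 0. -/
open MeasureTheory

theorem stmt_11 {Ω : Type*} [MeasurableSpace Ω] (μ : Measure Ω) [IsProbabilityMeasure μ]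
    (Y δ : Ω → ℝ) (hY : Measurable Y) (hδ : Measurable δ)
    (hY01 : ∀ ω, Y ω = 0 ∨ Y ω = 1) (hδ01 : ∀ ω, δ ω = 0 ∨ δ ω = 1)
    (p r : ℝ) (hp0 : 0 < p) (hp1 : p < 1) (hr0 : 0 < r) (hr1 : r ≤ 1)
    (hPY : μ {ω | Y ω = 1} = ENNReal.ofReal p)
    (hpos : ∀ ω, Y ω = 1 → δ ω = 1)
    (hneg : μ ({ω | δ ω = 1} ∩ {ω | Y ω = 0}) = ENNReal.ofReal r * μ {ω | Y ω = 0})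
    (g q : ℝ) (hg : g = Real.log (p / (1 - p)))
    (hq : q = Real.exp (g - Real.log r) / (1 + Real.exp (g - Real.log r))) :
    ∫ ω, δ ω * (Y ω - q) ∂μ = 0 := by
  set A : Set Ω := {ω | Y ω = 1} with hA
  set B : Set Ω := {ω | δ ω = 1} with hB
  have hAm : MeasurableSet A := hY (measurableSet_singleton 1)
  have hBm : MeasurableSet B := hδ (measurableSet_singleton 1)
  have hY0 : {ω | Y ω = 0} = Aᶜ := by
    ext ω; simp only [Set.mem_setOf_eq, Set.mem_compl_iff, hA]
    rcases hY01 ω with h | h <;> simp [h]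
  have hp1' : 0 < 1 - p := by linarith
  have hμAc : μ Aᶜ = ENNReal.ofReal (1 - p) := by
    rw [measure_compl hAm (measure_ne_top μ A), hPY, measure_univ,
      ← ENNReal.ofReal_one, ← ENNReal.ofReal_sub _ hp0.le]
  have hBA : B ∩ A = A := by
    ext ω; simp only [Set.mem_inter_iff, Set.mem_setOf_eq, hA, hB]
    exact ⟨fun h => h.2, fun h => ⟨hpos ω h, h⟩⟩
  have hμB : μ B = ENNReal.ofReal p + ENNReal.ofReal r * ENNReal.ofReal (1 - p) := by
    rw [← hPY, ← hμAc, ← hY0, ← hneg, ← measure_inter_add_diff B hAm]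
    congr 1
    · rw [hBA, hPY]
    · rw [Set.diff_eq, ← hY0, hneg, hY0]
  -- indicator representations
  have hYind : Y = A.indicator (fun _ => (1 : ℝ)) := by
    ext ω
    rcases hY01 ω with h | h
    · rw [h, Set.indicator_of_notMem]
      simp [hA, h]
    · rw [h, Set.indicator_of_mem]
      exact h
  have hδind : δ = B.indicator (fun _ => (1 : ℝ)) := by
    ext ω
    rcases hδ01 ω with h | h
    · rw [h, Set.indicator_of_notMem]
      simp [hB, h]
    · rw [h, Set.indicator_of_mem]
      exact h
  have hintY : Integrable Y μ := by
    rw [hYind]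
    exact (integrable_const (1 : ℝ)).indicator hAm
  have hintδ : Integrable δ μ := by
    rw [hδind]
    exact (integrable_const (1 : ℝ)).indicator hBm
  -- pointwise: δ ω * (Y ω - q) = Y ω - q * δ ω
  have hpt : ∀ ω, δ ω * (Y ω - q) = Y ω - q * δ ω := by
    intro ω
    rcases hY01 ω with h | h
    · rcases hδ01 ω with h' | h' <;> rw [h, h'] <;> ring
    · rw [h, hpos ω h]; ring
  have hiY : ∫ ω, Y ω ∂μ = p := by
    rw [hYind, integral_indicator_const _ hAm, measureReal_def, hPY, smul_eq_mul, mul_one,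
      ENNReal.toReal_ofReal hp0.le]
  have hiδ : ∫ ω, δ ω ∂μ = p + r * (1 - p) := by
    rw [hδind, integral_indicator_const _ hBm, measureReal_def, hμB, smul_eq_mul, mul_one,
      ← ENNReal.ofReal_mul hr0.le, ← ENNReal.ofReal_add hp0.le (by positivity),
      ENNReal.toReal_ofReal (by nlinarith)]
  have : ∫ ω, δ ω * (Y ω - q) ∂μ = ∫ ω, Y ω ∂μ - q * ∫ ω, δ ω ∂μ := by
    simp_rw [hpt]
    rw [integral_sub hintY (hintδ.const_mul q), integral_const_mul]
  rw [this, hiY, hiδ]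
  -- compute q
  have hexp : Real.exp (g - Real.log r) = p / ((1 - p) * r) := by
    rw [Real.exp_sub, hg, Real.exp_log (by positivity), Real.exp_log hr0, div_div]
  have hkey : q * (p + r * (1 - p)) = p := by
    have hden : (0:ℝ) < 1 + Real.exp (g - Real.log r) := by positivity
    rw [hq, div_mul_eq_mul_div, div_eq_iff hden.ne', hexp]
    field_simp
    ring
  linarith
end
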